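/- For all integers r ≥ 0 and n ≥ 1, (r+2)(r+3) · S_3^{(r)}(n) = C(n+r, r+1) · (6n² + 6rn + r(r−1)). -/
import Mathlib


/-- Hyper-sum of powers of integers: `S m 0 n = n^m` and
`S m (r+1) n = ∑ i in [1..n], S m r i`. -/
def S (m : ℕ) : ℕ → ℕ → ℚ
  | 0, n => (n : ℚ) ^ m
  | r + 1, n => ∑ i ∈ Finset.Icc 1 n, S m r i

theorem stmt_11 (r n : ℕ) (hn : 1 ≤ n) :
    ((r : ℚ) + 2) * ((r : ℚ) + 3) * S 3 r n
      = ((n + r).choose (r + 1) : ℚ)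
          * (6 * (n : ℚ) ^ 2 + 6 * (r : ℚ) * (n : ℚ) + (r : ℚ) * ((r : ℚ) - 1)) := by
  induction r generalizing n hn with
  | zero =>
    show _ * _ * (n:ℚ)^3 = _
    rw [Nat.add_zero, Nat.choose_one_right]
    push_cast
    ring
  | succ r ih =>
    induction n, hn using Nat.le_induction with
    | base =>
      have hne : ((r:ℚ)+2)*((r:ℚ)+3) ≠ 0 := by positivity
      have h1 := ih 1 le_rfl
      rw [show (1+r).choose (r+1) = 1 by rw [add_comm]; exact Nat.choose_self _] at h1
      have hS : S 3 r 1 = 1 := by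
        apply mul_left_cancel₀ hne
        rw [mul_one]
        push_cast at h1
        linear_combination h1
      have hs1 : S 3 (r+1) 1 = S 3 r 1 := by
        show (∑ i ∈ Finset.Icc 1 1, S 3 r i) = _
        simp
      rw [hs1, hS, show (1+(r+1)).choose (r+1+1) = 1 by
        rw [add_comm]; exact Nat.choose_self _]
      push_cast
      ring
    | succ n hn ihn =>
      have hne : ((r:ℚ)+2) ≠ 0 := by positivity
      have h1 := ihn
      have h2 := ih (n+1) (by omega)
      rw [show n+(r+1) = n+r+1 by omega, show r+1+1 = r+2 by omega] at h1
      rw [show n+1+r = n+r+1 by omega] at h2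
      have hsplit : S 3 (r+1) (n+1) = S 3 (r+1) n + S 3 r (n+1) := by
        show (∑ i ∈ Finset.Icc 1 (n+1), S 3 r i) = _
        rw [Finset.sum_Icc_succ_top (by omega)]
        rfl
      have h3 : (((n+r+2)).choose (r+2) : ℚ)
          = ((n+r+1).choose (r+1) : ℚ) + ((n+r+1).choose (r+2) : ℚ) := by
        rw [show n+r+2 = (n+r+1)+1 by omega, show r+2 = (r+1)+1 by omega,
          Nat.choose_succ_succ' (n+r+1) (r+1)]
        push_cast
        ring
      have h4 : ((n+r+1).choose (r+2) : ℚ) * ((r:ℚ)+2)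
          = ((n+r+1).choose (r+1) : ℚ) * (n:ℚ) := by
        have h := Nat.choose_succ_right_eq (n+r+1) (r+1)
        rw [show n+r+1 - (r+1) = n by omega, show r+1+1 = r+2 by omega] at h
        exact_mod_cast congrArg (Nat.cast : ℕ → ℚ) h
      rw [hsplit, show n+1+(r+1) = n+r+2 by omega, show r+1+1 = r+2 by omega]
      apply mul_left_cancel₀ hne
      push_cast at h1 h2 h3 h4 ⊢
      linear_combination ((r:ℚ)+2) * h1 + ((r:ℚ)+4) * h2
        - ((r:ℚ)+2) * (6*((n:ℚ)+1)^2 + 6*((r:ℚ)+1)*((n:ℚ)+1) + ((r:ℚ)+1)*(r:ℚ)) * h3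
        - (12*(n:ℚ)+6*(r:ℚ)+12) * h4
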